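/- In the partial bit-reversal procedure PBR applied to an array of length n = 2^t, each element originally at even index j = (2ℓ-1)·2^k > 0 is moved exactly k+1 times (once in each of the first k recursive levels, then once more), after which it remains fixed at position n/2^{k+1} + ℓ − 1 for all subsequent recursive calls. -/

import Mathlib

/-- One round of the stable even/odd partition on a segment of length `s`:
the element at position `i < s` moves to `i/2` if `i` is even and to
`s/2 + (i-1)/2` if `i` is odd; positions `≥ s` are untouched. -/
def pbrStep (s i : ℕ) : ℕ :=
  if i < s then (if i % 2 = 0 then i / 2 else s / 2 + (i - 1) / 2) else i

/-- Position of the element originally at position `i` after `d` rounds of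
PBR on an array of length `n` (each round halves the active segment). -/
def pbrPos : ℕ → ℕ → ℕ → ℕ
  | _, 0, i => i
  | n, d + 1, i => pbrPos (n / 2) d (pbrStep n i)

lemma pbrPos_fixed (d : ℕ) : ∀ m i : ℕ, m ≤ i → pbrPos m d i = i := by
  induction d with
  | zero => intro m i _; rfl
  | succ d ih =>
    intro m i h
    have hstep : pbrStep m i = i := by
      unfold pbrStep; rw [if_neg (by omega)]
    simp only [pbrPos, hstep]
    exact ih _ _ (le_trans (Nat.div_le_self m 2) h)

lemma pbrPos_add (d : ℕ) : ∀ e n i : ℕ,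
    pbrPos n (d + e) i = pbrPos (n / 2 ^ d) e (pbrPos n d i) := by
  induction d with
  | zero => intro e n i; simp [pbrPos]
  | succ d ih =>
    intro e n i
    have h1 : d + 1 + e = (d + e) + 1 := by omega
    rw [h1]
    show pbrPos (n / 2) (d + e) (pbrStep n i) = _
    rw [ih e (n / 2) (pbrStep n i)]
    have h2 : n / 2 / 2 ^ d = n / 2 ^ (d + 1) := by
      rw [Nat.div_div_eq_div_mul, pow_succ, mul_comm]
    rw [h2]
    rfl

lemma pbrPos_div (d : ℕ) : ∀ n i : ℕ, 2 ^ d ∣ i → 2 ^ d ∣ n → i < n →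
    pbrPos n d i = i / 2 ^ d := by
  induction d with
  | zero => intro n i _ _ _; simp [pbrPos]
  | succ d ih =>
    intro n i hi hn hlt
    obtain ⟨c, hc⟩ := hi
    obtain ⟨m, hm⟩ := hn
    have h2i : 2 ∣ i := ⟨2 ^ d * c, by rw [hc, pow_succ]; ring⟩
    have hmod : i % 2 = 0 := by omega
    have hstep : pbrStep n i = i / 2 := by
      unfold pbrStep
      rw [if_pos hlt, if_pos hmod]
    simp only [pbrPos, hstep]
    have hi2 : i / 2 = 2 ^ d * c := by
      rw [hc, pow_succ, mul_comm (2 ^ d) 2, mul_assoc,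
        Nat.mul_div_cancel_left _ (by norm_num : (0:ℕ) < 2)]
    have hn2 : n / 2 = 2 ^ d * m := by
      rw [hm, pow_succ, mul_comm (2 ^ d) 2, mul_assoc,
        Nat.mul_div_cancel_left _ (by norm_num : (0:ℕ) < 2)]
    have hcm : c < m := by
      have h' := hlt
      rw [hc, hm] at h'
      exact Nat.lt_of_mul_lt_mul_left h'
    rw [ih (n / 2) (i / 2) ⟨c, hi2⟩ ⟨m, hn2⟩ (by
      rw [hi2, hn2]
      exact Nat.mul_lt_mul_left (Nat.pow_pos (n := d) (by norm_num : 0 < 2)) |>.mpr hcm)]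
    rw [Nat.div_div_eq_div_mul, pow_succ, mul_comm]

theorem pbr_movement (t n : ℕ) (ht : 1 ≤ t) (hn : n = 2 ^ t)
    (k ℓ j : ℕ) (hk : 1 ≤ k) (hℓ : 1 ≤ ℓ)
    (hj : j = (2 * ℓ - 1) * 2 ^ k) (hjn : j < n) :
    (∀ d : ℕ, d ≤ k → pbrPos n d j = j / 2 ^ d) ∧
    (∀ d : ℕ, k + 1 ≤ d → pbrPos n d j = n / 2 ^ (k + 1) + ℓ - 1) := by
  have hkt : k < t := by
    by_contra h
    push_neg at h
    have h1 : 2 ^ t ≤ 2 ^ k := Nat.pow_le_pow_right (by norm_num) h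
    have h2 : 2 ^ k ≤ j := by
      rw [hj]
      exact Nat.le_mul_of_pos_left _ (by omega)
    omega
  have hdvdn : ∀ d : ℕ, d ≤ k → (2:ℕ) ^ d ∣ n := fun d hd =>
    hn ▸ pow_dvd_pow 2 (by omega)
  have hdvdj : ∀ d : ℕ, d ≤ k → (2:ℕ) ^ d ∣ j := fun d hd =>
    hj ▸ Dvd.dvd.mul_left (pow_dvd_pow 2 hd) _
  have part1 : ∀ d : ℕ, d ≤ k → pbrPos n d j = j / 2 ^ d := fun d hd =>
    pbrPos_div d n j (hdvdj d hd) (hdvdn d hd) hjn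
  refine ⟨part1, ?_⟩
  -- value after k rounds
  have hjk : j / 2 ^ k = 2 * ℓ - 1 := by
    rw [hj, Nat.mul_div_cancel _ (Nat.pow_pos (n := k) (by norm_num : 0 < 2))]
  -- segment length after k rounds
  have hnk : n / 2 ^ k = 2 ^ (t - k) := by
    rw [hn, Nat.pow_div (by omega) (by norm_num)]
  have hlt : 2 * ℓ - 1 < n / 2 ^ k := by
    have h1 : (2 * ℓ - 1) * 2 ^ k < (n / 2 ^ k) * 2 ^ k := by
      rw [Nat.div_mul_cancel (hdvdn k le_rfl)]
      omega
    exact Nat.lt_of_mul_lt_mul_right h1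
  have hnk2 : n / 2 ^ k / 2 = n / 2 ^ (k + 1) := by
    rw [Nat.div_div_eq_div_mul, pow_succ]
  have step_k1 : pbrPos n (k + 1) j = n / 2 ^ (k + 1) + ℓ - 1 := by
    rw [pbrPos_add k 1 n j, part1 k le_rfl, hjk]
    show pbrPos (n / 2 ^ k / 2) 0 (pbrStep (n / 2 ^ k) (2 * ℓ - 1)) = _
    simp only [pbrPos]
    unfold pbrStep
    rw [if_pos hlt, if_neg (by omega), hnk2]
    omega
  intro d hd
  obtain ⟨e, rfl⟩ : ∃ e, d = (k + 1) + e := ⟨d - (k + 1), by omega⟩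
  rw [pbrPos_add (k + 1) e n j, step_k1]
  apply pbrPos_fixed
  have hpos : 0 < n / 2 ^ (k + 1) := by
    rw [hn, Nat.pow_div (by omega) (by norm_num)]
    positivity
  omega
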